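/- Let A and B be m×n real matrices. Then rk(A_{[p,q]}) = rk(B_{[p,q]}) for all 1 ≤ p ≤ m and 1 ≤ q ≤ n if and only if there exist an invertible lower triangular m×m matrix λ and an invertible upper triangular n×n matrix μ such that B = λ A μ. Here A_{[p,q]} denotes the upper-left p×q submatrix of A. -/

import Mathlib

open Matrix Finset

/-- The upper-left `p × q` submatrix `A_{[p,q]}` of an `m × n` matrix. -/
def ulSub {m n : ℕ} (A : Matrix (Fin m) (Fin n) ℝ) (p q : ℕ) (hp : p ≤ m) (hq : q ≤ n) :
    Matrix (Fin p) (Fin q) ℝ :=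
  A.submatrix (Fin.castLE hp) (Fin.castLE hq)

section Aux

/-- lower triangular -/
def LoT {m : ℕ} (L : Matrix (Fin m) (Fin m) ℝ) : Prop := ∀ i j : Fin m, i < j → L i j = 0
/-- upper triangular -/
def UpT {n : ℕ} (U : Matrix (Fin n) (Fin n) ℝ) : Prop := ∀ i j : Fin n, j < i → U i j = 0

lemma LoT.bt {m : ℕ} {L : Matrix (Fin m) (Fin m) ℝ} (h : LoT L) :
    L.BlockTriangular OrderDual.toDual := fun i j hij => h i j (by simpa using hij)

lemma UpT.bt {n : ℕ} {U : Matrix (Fin n) (Fin n) ℝ} (h : UpT U) :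
    U.BlockTriangular id := fun i j hij => h i j hij

lemma LoT.det_eq {m : ℕ} {L : Matrix (Fin m) (Fin m) ℝ} (h : LoT L) :
    L.det = ∏ i, L i i := Matrix.det_of_lowerTriangular L h.bt

lemma UpT.det_eq {n : ℕ} {U : Matrix (Fin n) (Fin n) ℝ} (h : UpT U) :
    U.det = ∏ i, U i i := Matrix.det_of_upperTriangular h.bt

lemma LoT.mul {m : ℕ} {L L' : Matrix (Fin m) (Fin m) ℝ} (h : LoT L) (h' : LoT L') :
    LoT (L * L') := fun i j hij => (h.bt.mul h'.bt) (by simpa using hij)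

lemma UpT.mul {n : ℕ} {U U' : Matrix (Fin n) (Fin n) ℝ} (h : UpT U) (h' : UpT U') :
    UpT (U * U') := fun _ _ hij => (h.bt.mul h'.bt) hij

lemma LoT.inv {m : ℕ} {L : Matrix (Fin m) (Fin m) ℝ} (h : LoT L) (hd : IsUnit L.det) :
    LoT L⁻¹ := by
  letI := L.invertibleOfIsUnitDet hd
  exact fun i j hij => (Matrix.blockTriangular_inv_of_blockTriangular h.bt) (by simpa using hij)

lemma UpT.inv {n : ℕ} {U : Matrix (Fin n) (Fin n) ℝ} (h : UpT U) (hd : IsUnit U.det) :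
    UpT U⁻¹ := by
  letI := U.invertibleOfIsUnitDet hd
  exact fun i j hij => (Matrix.blockTriangular_inv_of_blockTriangular h.bt) hij

lemma LoT.diag_ne {m : ℕ} {L : Matrix (Fin m) (Fin m) ℝ} (h : LoT L) (hd : IsUnit L.det)
    (i : Fin m) : L i i ≠ 0 := by
  have := hd.ne_zero
  rw [h.det_eq] at this
  exact Finset.prod_ne_zero_iff.mp this i (mem_univ i)

lemma UpT.diag_ne {n : ℕ} {U : Matrix (Fin n) (Fin n) ℝ} (h : UpT U) (hd : IsUnit U.det)
    (i : Fin n) : U i i ≠ 0 := by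
  have := hd.ne_zero
  rw [h.det_eq] at this
  exact Finset.prod_ne_zero_iff.mp this i (mem_univ i)

lemma mem_map_castLE {p m : ℕ} (hp : p ≤ m) (k : Fin m) :
    k ∈ Finset.univ.map (Fin.castLEEmb hp) ↔ (k : ℕ) < p := by
  simp only [Finset.mem_map, Finset.mem_univ, true_and]
  constructor
  · rintro ⟨k', rfl⟩; exact k'.isLt
  · intro hk; exact ⟨⟨k, hk⟩, rfl⟩

lemma ulSub_mul_lo {m n p q : ℕ} (L : Matrix (Fin m) (Fin m) ℝ) (A : Matrix (Fin m) (Fin n) ℝ)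
    (hL : LoT L) (hp : p ≤ m) (hq : q ≤ n) :
    ulSub (L * A) p q hp hq = ulSub L p p hp hp * ulSub A p q hp hq := by
  ext i j
  show (L * A) (Fin.castLE hp i) (Fin.castLE hq j) = _
  rw [Matrix.mul_apply]
  have h1 : ∑ k : Fin m, L (Fin.castLE hp i) k * A k (Fin.castLE hq j)
      = ∑ k ∈ Finset.univ.map (Fin.castLEEmb hp),
          L (Fin.castLE hp i) k * A k (Fin.castLE hq j) := by
    refine (Finset.sum_subset (Finset.subset_univ _) ?_).symm
    intro k _ hk
    rw [mem_map_castLE] at hk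
    have : Fin.castLE hp i < k := by
      rw [Fin.lt_def]
      simp only [Fin.coe_castLE]
      omega
    rw [hL _ _ this, zero_mul]
  rw [h1, Finset.sum_map]
  rfl

lemma ulSub_mul_up {m n p q : ℕ} (A : Matrix (Fin m) (Fin n) ℝ) (U : Matrix (Fin n) (Fin n) ℝ)
    (hU : UpT U) (hp : p ≤ m) (hq : q ≤ n) :
    ulSub (A * U) p q hp hq = ulSub A p q hp hq * ulSub U q q hq hq := by
  ext i j
  show (A * U) (Fin.castLE hp i) (Fin.castLE hq j) = _
  rw [Matrix.mul_apply]
  have h1 : ∑ k : Fin n, A (Fin.castLE hp i) k * U k (Fin.castLE hq j)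
      = ∑ k ∈ Finset.univ.map (Fin.castLEEmb hq),
          A (Fin.castLE hp i) k * U k (Fin.castLE hq j) := by
    refine (Finset.sum_subset (Finset.subset_univ _) ?_).symm
    intro k _ hk
    rw [mem_map_castLE] at hk
    have : Fin.castLE hq j < k := by
      rw [Fin.lt_def]
      simp only [Fin.coe_castLE]
      omega
    rw [hU _ _ this, mul_zero]
  rw [h1, Finset.sum_map]
  rfl

lemma LoT.ulSub_tri {m p : ℕ} {L : Matrix (Fin m) (Fin m) ℝ} (h : LoT L) (hp : p ≤ m) :
    LoT (ulSub L p p hp hp) := by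
  intro i j hij
  exact h _ _ (by rw [Fin.lt_def]; simpa using hij)

lemma UpT.ulSub_tri {n q : ℕ} {U : Matrix (Fin n) (Fin n) ℝ} (h : UpT U) (hq : q ≤ n) :
    UpT (ulSub U q q hq hq) := by
  intro i j hij
  exact h _ _ (by rw [Fin.lt_def]; simpa using hij)

lemma LoT.ulSub_det {m p : ℕ} {L : Matrix (Fin m) (Fin m) ℝ} (h : LoT L)
    (hd : IsUnit L.det) (hp : p ≤ m) : IsUnit (ulSub L p p hp hp).det := by
  rw [(h.ulSub_tri hp).det_eq, isUnit_iff_ne_zero, Finset.prod_ne_zero_iff]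
  intro i _
  exact h.diag_ne hd _

lemma UpT.ulSub_det {n q : ℕ} {U : Matrix (Fin n) (Fin n) ℝ} (h : UpT U)
    (hd : IsUnit U.det) (hq : q ≤ n) : IsUnit (ulSub U q q hq hq).det := by
  rw [(h.ulSub_tri hq).det_eq, isUnit_iff_ne_zero, Finset.prod_ne_zero_iff]
  intro i _
  exact h.diag_ne hd _

/-- Core invariance: multiplying by invertible triangular matrices preserves all
upper-left submatrix ranks. -/
lemma rank_ulSub_mul {m n p q : ℕ} (L : Matrix (Fin m) (Fin m) ℝ) (A : Matrix (Fin m) (Fin n) ℝ)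
    (U : Matrix (Fin n) (Fin n) ℝ) (hL : LoT L) (hU : UpT U)
    (hLd : IsUnit L.det) (hUd : IsUnit U.det) (hp : p ≤ m) (hq : q ≤ n) :
    (ulSub (L * A * U) p q hp hq).rank = (ulSub A p q hp hq).rank := by
  rw [ulSub_mul_up _ _ hU hp hq, ulSub_mul_lo _ _ hL hp hq,
    Matrix.rank_mul_eq_left_of_isUnit_det _ _ (hU.ulSub_det hUd hq),
    Matrix.rank_mul_eq_right_of_isUnit_det _ _ (hL.ulSub_det hLd hp)]

end Aux

section PP
variable {m n : ℕ}

/-- partial permutation matrix from a partial function -/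
def ppMat (f : Fin m → Option (Fin n)) : Matrix (Fin m) (Fin n) ℝ :=
  Matrix.of fun i j => if f i = some j then 1 else 0

/-- partial injectivity -/
def PInj (f : Fin m → Option (Fin n)) : Prop :=
  ∀ ⦃i i' : Fin m⦄ ⦃j : Fin n⦄, f i = some j → f i' = some j → i = i'

open Classical in
lemma ppMat_transpose_mul (f : Fin m → Option (Fin n)) (hf : PInj f) :
    (ppMat f)ᵀ * ppMat f
      = Matrix.diagonal (fun j => if ∃ i, f i = some j then (1 : ℝ) else 0) := by
  ext j j'
  rw [Matrix.mul_apply]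
  by_cases hjj : j = j'
  · subst hjj
    simp only [Matrix.diagonal_apply_eq, Matrix.transpose_apply, ppMat, Matrix.of_apply]
    by_cases hex : ∃ i, f i = some j
    · obtain ⟨i₀, hi₀⟩ := hex
      rw [if_pos ⟨i₀, hi₀⟩]
      rw [Finset.sum_eq_single i₀]
      · rw [if_pos hi₀]; norm_num
      · intro i _ hne
        have : f i ≠ some j := fun h => hne (hf h hi₀)
        rw [if_neg this, zero_mul]
      · intro h; exact absurd (mem_univ i₀) h
    · rw [if_neg hex]
      refine Finset.sum_eq_zero fun i _ => ?_
      have : f i ≠ some j := fun h => hex ⟨i, h⟩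
      rw [if_neg this, zero_mul]
  · rw [Matrix.diagonal_apply_ne _ hjj]
    refine Finset.sum_eq_zero fun i _ => ?_
    simp only [Matrix.transpose_apply, ppMat, Matrix.of_apply]
    by_cases h1 : f i = some j
    · have : f i ≠ some j' := by rw [h1]; simpa using fun h => hjj h
      rw [if_neg this, mul_zero]
    · rw [if_neg h1, zero_mul]

open Classical in
lemma rank_ppMat (f : Fin m → Option (Fin n)) (hf : PInj f) :
    (ppMat f).rank
      = (Finset.univ.filter fun ij : Fin m × Fin n => f ij.1 = some ij.2).card := by
  rw [← Matrix.rank_transpose_mul_self, ppMat_transpose_mul f hf, Matrix.rank_diagonal]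
  rw [← Fintype.card_subtype]
  refine Fintype.card_congr ?_
  refine Equiv.trans (Equiv.subtypeEquivRight (q := fun j => ∃ i, f i = some j) ?_) ?_
  · intro j
    by_cases hex : ∃ i, f i = some j
    · simp [hex]
    · simp [hex]
  · exact
    { toFun := fun j => ⟨(Classical.choose j.2, j.1), Classical.choose_spec j.2⟩
      invFun := fun ij => ⟨ij.1.2, ⟨ij.1.1, ij.2⟩⟩
      left_inv := fun j => rfl
      right_inv := fun ij => by
        have h1 := Classical.choose_spec (⟨ij.1.1, ij.2⟩ : ∃ i, f i = some ij.1.2)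
        apply Subtype.ext
        have := hf h1 ij.2
        exact Prod.ext this rfl }

end PP

section PP2
variable {m n : ℕ}

def truncF (f : Fin m → Option (Fin n)) (p q : ℕ) (hp : p ≤ m) (hq : q ≤ n) :
    Fin p → Option (Fin q) := fun i =>
  (f (Fin.castLE hp i)).bind fun j => if hj : (j : ℕ) < q then some ⟨j, hj⟩ else none

lemma truncF_eq_some {f : Fin m → Option (Fin n)} {p q : ℕ} {hp : p ≤ m} {hq : q ≤ n}
    {i : Fin p} {j : Fin q} :
    truncF f p q hp hq i = some j ↔ f (Fin.castLE hp i) = some (Fin.castLE hq j) := by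
  unfold truncF
  cases hfi : f (Fin.castLE hp i) with
  | none => simp
  | some j' =>
    simp only [Option.bind_some, Option.some_inj]
    constructor
    · intro h
      split at h
      · cases h; rfl
      · cases h
    · intro h
      cases h
      simp only [Fin.coe_castLE]
      rw [dif_pos j.isLt]

lemma PInj.trunc {f : Fin m → Option (Fin n)} (hf : PInj f) (p q : ℕ) (hp : p ≤ m) (hq : q ≤ n) :
    PInj (truncF f p q hp hq) := by
  intro i i' j h h'
  rw [truncF_eq_some] at h h'
  have := hf h h'
  exact Fin.ext (by simpa [Fin.ext_iff] using this)

lemma ulSub_ppMat (f : Fin m → Option (Fin n)) (p q : ℕ) (hp : p ≤ m) (hq : q ≤ n) :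
    ulSub (ppMat f) p q hp hq = ppMat (truncF f p q hp hq) := by
  ext i j
  show (if f (Fin.castLE hp i) = some (Fin.castLE hq j) then (1:ℝ) else 0) = _
  simp only [ppMat, Matrix.of_apply]
  congr 1
  rw [eq_iff_iff, ← truncF_eq_some]

def cntF (f : Fin m → Option (Fin n)) (p q : ℕ) : ℕ :=
  (Finset.univ.filter fun ij : Fin m × Fin n =>
    f ij.1 = some ij.2 ∧ (ij.1 : ℕ) < p ∧ (ij.2 : ℕ) < q).card

lemma card_trunc (f : Fin m → Option (Fin n)) (p q : ℕ) (hp : p ≤ m) (hq : q ≤ n) :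
    (Finset.univ.filter fun ij : Fin p × Fin q =>
        truncF f p q hp hq ij.1 = some ij.2).card = cntF f p q := by
  unfold cntF
  refine Finset.card_bij (fun ij _ => (Fin.castLE hp ij.1, Fin.castLE hq ij.2)) ?_ ?_ ?_
  · intro ij hij
    rw [Finset.mem_filter] at hij ⊢
    refine ⟨mem_univ _, truncF_eq_some.mp hij.2, by simp [ij.1.isLt], by simp [ij.2.isLt]⟩
  · intro a ha b hb hab
    rw [Prod.ext_iff] at hab
    exact Prod.ext (Fin.ext (by simpa [Fin.ext_iff] using hab.1))
      (Fin.ext (by simpa [Fin.ext_iff] using hab.2))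
  · intro ij hij
    rw [Finset.mem_filter] at hij
    obtain ⟨-, hg, h1, h2⟩ := hij
    refine ⟨(⟨ij.1, h1⟩, ⟨ij.2, h2⟩), ?_, ?_⟩
    · rw [Finset.mem_filter]
      refine ⟨mem_univ _, truncF_eq_some.mpr ?_⟩
      convert hg <;> exact Fin.ext rfl
    · exact Prod.ext (Fin.ext rfl) (Fin.ext rfl)
end PP2

section Cnt
variable {m n : ℕ}


lemma cntF_succ (f : Fin m → Option (Fin n)) (i : Fin m) (j : Fin n) :
    cntF f (i + 1) (j + 1) + cntF f i j
      = cntF f i (j + 1) + cntF f (i + 1) j + (if f i = some j then 1 else 0) := by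
  classical
  set S := fun (p q : ℕ) => (Finset.univ.filter fun ij : Fin m × Fin n =>
    f ij.1 = some ij.2 ∧ (ij.1 : ℕ) < p ∧ (ij.2 : ℕ) < q) with hS
  have hinter : S i (j + 1) ∩ S (i + 1) j = S i j := by
    ext ab
    simp only [hS, Finset.mem_inter, Finset.mem_filter, Finset.mem_univ, true_and]
    constructor
    · rintro ⟨⟨h1, h2, _⟩, ⟨_, _, h5⟩⟩
      exact ⟨h1, h2, h5⟩
    · rintro ⟨h1, h2, h3⟩
      exact ⟨⟨h1, h2, by omega⟩, ⟨h1, by omega, h3⟩⟩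
  have hcui := Finset.card_union_add_card_inter (S i (j+1)) (S (i+1) j)
  rw [hinter] at hcui
  have hbig : ∀ ab : Fin m × Fin n, ab ∈ S (i+1) (j+1) ↔
      ab = (i, j) ∧ f i = some j ∨ ab ∈ S i (j+1) ∪ S (i+1) j := by
    intro ⟨a, b⟩
    simp only [hS, Finset.mem_union, Finset.mem_filter, Finset.mem_univ, true_and,
      Prod.mk.injEq, Prod.ext_iff]
    constructor
    · rintro ⟨h1, h2, h3⟩
      by_cases ha : (a : ℕ) = (i : ℕ)
      · by_cases hb : (b : ℕ) = (j : ℕ)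
        · left
          have ha' : a = i := Fin.ext ha
          have hb' : b = j := Fin.ext hb
          subst ha'; subst hb'
          exact ⟨⟨rfl, rfl⟩, h1⟩
        · right; right; exact ⟨h1, by omega, by omega⟩
      · right; left; exact ⟨h1, by omega, by omega⟩
    · rintro (⟨⟨rfl, rfl⟩, hg⟩ | ⟨h1, h2, h3⟩ | ⟨h1, h2, h3⟩)
      · exact ⟨hg, by omega, by omega⟩
      · exact ⟨h1, by omega, by omega⟩
      · exact ⟨h1, by omega, by omega⟩
  have hnotmem : (i, j) ∉ S i (j+1) ∪ S (i+1) j := by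
    simp only [hS, Finset.mem_union, Finset.mem_filter, Finset.mem_univ, true_and]
    rintro (⟨_, h, _⟩ | ⟨_, _, h⟩) <;> omega
  by_cases hf : f i = some j
  · have : S (i+1) (j+1) = insert (i, j) (S i (j+1) ∪ S (i+1) j) := by
      ext ab
      rw [hbig ab, Finset.mem_insert]
      constructor
      · rintro (⟨rfl, _⟩ | h)
        · exact Or.inl rfl
        · exact Or.inr h
      · rintro (rfl | h)
        · exact Or.inl ⟨rfl, hf⟩
        · exact Or.inr h
    have hc : (S (i+1) (j+1)).card = (S i (j+1) ∪ S (i+1) j).card + 1 := by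
      rw [this, Finset.card_insert_of_notMem hnotmem]
    show (S (i+1) (j+1)).card + (S i j).card
        = (S i (j+1)).card + (S (i+1) j).card + _
    rw [if_pos hf]
    omega
  · have : S (i+1) (j+1) = S i (j+1) ∪ S (i+1) j := by
      ext ab
      rw [hbig ab]
      constructor
      · rintro (⟨_, hg⟩ | h)
        · exact absurd hg hf
        · exact h
      · exact fun h => Or.inr h
    show (S (i+1) (j+1)).card + (S i j).card
        = (S i (j+1)).card + (S (i+1) j).card + _
    rw [if_neg hf, this]
    omega

lemma cntF_eq_of_forall {f g : Fin m → Option (Fin n)}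
    (h : ∀ p q : ℕ, p ≤ m → q ≤ n → cntF f p q = cntF g p q) : f = g := by
  have key : ∀ (i : Fin m) (j : Fin n),
      (if f i = some j then (1:ℕ) else 0) = (if g i = some j then 1 else 0) := by
    intro i j
    have h1 := cntF_succ f i j
    have h2 := cntF_succ g i j
    have e1 := h (i+1) (j+1) i.isLt j.isLt
    have e2 := h i j (le_of_lt i.isLt) (le_of_lt j.isLt)
    have e3 := h i (j+1) (le_of_lt i.isLt) j.isLt
    have e4 := h (i+1) j i.isLt (le_of_lt j.isLt)
    omega
  funext i
  cases hfi : f i with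
  | none =>
    cases hgi : g i with
    | none => rfl
    | some j =>
      have := key i j
      rw [hfi, hgi] at this
      simp at this
  | some j =>
    have := key i j
    cases hgi : g i with
    | none => rw [hfi, hgi] at this; simp at this
    | some j' =>
      rw [hfi, hgi] at this
      simp only [Option.some_inj, if_true, eq_self_iff_true] at this
      by_cases hjj : j' = j
      · rw [hjj]
      · rw [if_neg hjj] at this
        simp at this
end Cnt

section Helpers
variable {m n : ℕ}

/-- extend a lower triangular matrix by a 1 in the upper-left corner -/
def extL (L : Matrix (Fin m) (Fin m) ℝ) : Matrix (Fin (m+1)) (Fin (m+1)) ℝ :=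
  Matrix.of (Fin.cons (Fin.cons 1 0) fun i => Fin.cons 0 (L i))

lemma extL_mul_cons (L : Matrix (Fin m) (Fin m) ℝ) (r : Fin n → ℝ)
    (M : Matrix (Fin m) (Fin n) ℝ) :
    extL L * Matrix.of (Fin.cons r M) = Matrix.of (Fin.cons r (L * M)) := by
  ext i j
  refine Fin.cases ?_ (fun i => ?_) i <;>
    simp [extL, Matrix.mul_apply, Fin.sum_univ_succ] <;> rfl

lemma consRow_mul (r : Fin n → ℝ) (M : Matrix (Fin m) (Fin n) ℝ) (U : Matrix (Fin n) (Fin n) ℝ) :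
    Matrix.of (Fin.cons r M) * U
      = Matrix.of (Fin.cons (fun j => ∑ k, r k * U k j) (M * U)) := by
  ext i j
  refine Fin.cases ?_ (fun i => ?_) i <;>
    simp [Matrix.mul_apply] <;> rfl

lemma LoT.extL {L : Matrix (Fin m) (Fin m) ℝ} (h : LoT L) : LoT (_root_.extL L) := by
  intro i j hij
  rcases Fin.eq_zero_or_eq_succ i with rfl | ⟨i', rfl⟩ <;>
    rcases Fin.eq_zero_or_eq_succ j with rfl | ⟨j', rfl⟩
  · exact absurd hij (lt_irrefl _)
  · simp [_root_.extL]
  · exact absurd hij (by simp [Fin.lt_def])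
  · have hij' : i' < j' := by rwa [Fin.succ_lt_succ_iff] at hij
    simp [_root_.extL, h _ _ hij']

lemma extL_det {L : Matrix (Fin m) (Fin m) ℝ} (h : LoT L) :
    (extL L).det = L.det := by
  rw [h.extL.det_eq, h.det_eq, Fin.prod_univ_succ]
  simp [extL]

end Helpers

section Ins
variable {m n : ℕ}

/-- insert a zero column at position `j₀` -/
def insCol (j₀ : Fin (n+1)) (M : Matrix (Fin m) (Fin n) ℝ) : Matrix (Fin m) (Fin (n+1)) ℝ :=
  Matrix.of fun i => Fin.insertNth j₀ 0 (M i)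

/-- insert an identity row and column at position `j₀` -/
def insU (j₀ : Fin (n+1)) (U : Matrix (Fin n) (Fin n) ℝ) :
    Matrix (Fin (n+1)) (Fin (n+1)) ℝ :=
  Matrix.of (Fin.insertNth j₀ (fun j => if j = j₀ then 1 else 0)
    (fun k => Fin.insertNth j₀ 0 (U k)))

@[simp] lemma insCol_apply_same (j₀ : Fin (n+1)) (M : Matrix (Fin m) (Fin n) ℝ) (i : Fin m) :
    insCol j₀ M i j₀ = 0 := by
  simp [insCol]

@[simp] lemma insCol_apply_succAbove (j₀ : Fin (n+1)) (M : Matrix (Fin m) (Fin n) ℝ)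
    (i : Fin m) (j : Fin n) : insCol j₀ M i (j₀.succAbove j) = M i j := by
  simp [insCol]

@[simp] lemma insU_row_same (j₀ : Fin (n+1)) (U : Matrix (Fin n) (Fin n) ℝ) (j : Fin (n+1)) :
    insU j₀ U j₀ j = if j = j₀ then 1 else 0 := by
  simp [insU, Matrix.of_apply]

@[simp] lemma insU_succAbove_same (j₀ : Fin (n+1)) (U : Matrix (Fin n) (Fin n) ℝ) (k : Fin n) :
    insU j₀ U (j₀.succAbove k) j₀ = 0 := by
  simp [insU, Matrix.of_apply]

@[simp] lemma insU_succAbove_succAbove (j₀ : Fin (n+1)) (U : Matrix (Fin n) (Fin n) ℝ)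
    (k j : Fin n) : insU j₀ U (j₀.succAbove k) (j₀.succAbove j) = U k j := by
  simp [insU, Matrix.of_apply]

lemma UpT.insU {U : Matrix (Fin n) (Fin n) ℝ} (h : UpT U) (j₀ : Fin (n+1)) :
    UpT (_root_.insU j₀ U) := by
  intro k j hjk
  by_cases hk : k = j₀
  · subst hk
    rw [insU_row_same, if_neg (fun hj => absurd (hj ▸ hjk) (lt_irrefl _))]
  · obtain ⟨k', rfl⟩ := Fin.exists_succAbove_eq hk
    by_cases hj : j = j₀
    · subst hj; rw [insU_succAbove_same]
    · obtain ⟨j', rfl⟩ := Fin.exists_succAbove_eq hj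
      rw [insU_succAbove_succAbove]
      exact h _ _ (Fin.succAbove_lt_succAbove_iff.mp hjk)

lemma insU_det {U : Matrix (Fin n) (Fin n) ℝ} (h : UpT U) (j₀ : Fin (n+1)) :
    (insU j₀ U).det = U.det := by
  rw [(h.insU j₀).det_eq, h.det_eq, Fin.prod_univ_succAbove (fun j => insU j₀ U j j) j₀]
  simp

lemma mul_insCol (j₀ : Fin (n+1)) (L : Matrix (Fin m) (Fin m) ℝ)
    (M : Matrix (Fin m) (Fin n) ℝ) :
    L * insCol j₀ M = insCol j₀ (L * M) := by
  ext i j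
  by_cases hj : j = j₀
  · subst hj
    rw [Matrix.mul_apply, insCol_apply_same]
    exact Finset.sum_eq_zero fun k _ => by rw [insCol_apply_same, mul_zero]
  · obtain ⟨j', rfl⟩ := Fin.exists_succAbove_eq hj
    rw [Matrix.mul_apply, insCol_apply_succAbove, Matrix.mul_apply]
    exact Finset.sum_congr rfl fun k _ => by rw [insCol_apply_succAbove]

lemma insCol_mul_insU (j₀ : Fin (n+1)) (Q : Matrix (Fin m) (Fin n) ℝ)
    (U : Matrix (Fin n) (Fin n) ℝ) :
    insCol j₀ Q * insU j₀ U = insCol j₀ (Q * U) := by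
  ext i j
  rw [Matrix.mul_apply, Fin.sum_univ_succAbove _ j₀, insCol_apply_same, zero_mul, zero_add]
  by_cases hj : j = j₀
  · subst hj
    rw [insCol_apply_same]
    exact Finset.sum_eq_zero fun k _ => by
      rw [insCol_apply_succAbove, insU_succAbove_same, mul_zero]
  · obtain ⟨j', rfl⟩ := Fin.exists_succAbove_eq hj
    rw [insCol_apply_succAbove, Matrix.mul_apply]
    exact Finset.sum_congr rfl fun k _ => by
      rw [insCol_apply_succAbove, insU_succAbove_succAbove]

end Ins


section LPU

lemma exists_lpu : ∀ (m n : ℕ) (A : Matrix (Fin m) (Fin n) ℝ),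
    ∃ (L : Matrix (Fin m) (Fin m) ℝ) (U : Matrix (Fin n) (Fin n) ℝ)
      (f : Fin m → Option (Fin n)),
      LoT L ∧ UpT U ∧ IsUnit L.det ∧ IsUnit U.det ∧ PInj f ∧ A = L * ppMat f * U := by
  intro m
  induction m with
  | zero =>
    intro n A
    refine ⟨1, 1, fun _ => none, fun i => i.elim0, ?_, ?_, ?_, ?_, ?_⟩
    · intro i j hij
      exact Matrix.one_apply_ne (ne_of_gt hij)
    · simp
    · simp
    · intro i; exact i.elim0
    · ext i j; exact i.elim0
  | succ m ih =>
    intro n A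
    match n with
    | 0 =>
      refine ⟨1, 1, fun _ => none, ?_, fun j => j.elim0, ?_, ?_, ?_, ?_⟩
      · intro i j hij
        exact Matrix.one_apply_ne (ne_of_lt hij)
      · simp
      · simp
      · intro i i' j; exact j.elim0
      · ext i j; exact j.elim0
    | n + 1 =>
      by_cases h0 : A 0 = 0
      · -- first row zero
        obtain ⟨L₁, U₁, f₁, hL₁, hU₁, hLd₁, hUd₁, hf₁, hA₁⟩ :=
          ih (n+1) (Matrix.of fun i => A i.succ)
        refine ⟨extL L₁, U₁, Fin.cons none f₁, hL₁.extL, hU₁, ?_, hUd₁, ?_, ?_⟩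
        · rw [extL_det hL₁]; exact hLd₁
        · intro i i' j hi hi'
          rcases Fin.eq_zero_or_eq_succ i with rfl | ⟨i2, rfl⟩
          · simp at hi
          · rcases Fin.eq_zero_or_eq_succ i' with rfl | ⟨i2', rfl⟩
            · simp at hi'
            · rw [Fin.cons_succ] at hi hi'
              exact congrArg Fin.succ (hf₁ hi hi')
        · have hpp : ppMat (Fin.cons none f₁)
              = Matrix.of (Fin.cons (0 : Fin (n+1) → ℝ) (ppMat f₁)) := by
            ext i j
            rcases Fin.eq_zero_or_eq_succ i with rfl | ⟨i2, rfl⟩ <;> simp [ppMat] <;> rfl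
          rw [hpp, extL_mul_cons, consRow_mul]
          ext i j
          rcases Fin.eq_zero_or_eq_succ i with rfl | ⟨i2, rfl⟩
          · simp only [Matrix.of_apply, Fin.cons_zero]
            rw [show A 0 j = 0 from congrFun h0 j]
            simp
            rfl
          · simp only [Matrix.of_apply, Fin.cons_succ, ← hA₁]
            rfl
      · -- first row nonzero
        have hex : ∃ j, A 0 j ≠ 0 := by
          by_contra hno
          push_neg at hno
          exact h0 (funext fun j => hno j)
        set s : Finset (Fin (n+1)) := Finset.univ.filter (fun j => A 0 j ≠ 0) with hs
        have hsne : s.Nonempty := ⟨hex.choose, by simp [hs, hex.choose_spec]⟩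
        set j₀ := s.min' hsne with hj₀def
        have hj₀ : A 0 j₀ ≠ 0 := by
          have := s.min'_mem hsne
          simp only [hs, Finset.mem_filter] at this
          exact this.2
        have hmin : ∀ j, A 0 j ≠ 0 → j₀ ≤ j := fun j hj =>
          s.min'_le j (by simp [hs, hj])
        set U₀ : Matrix (Fin (n+1)) (Fin (n+1)) ℝ := Matrix.of fun k j =>
          if j = j₀ then (if k = j₀ then (A 0 j₀)⁻¹ else 0)
          else if k = j then 1 else if k = j₀ then -(A 0 j) * (A 0 j₀)⁻¹ else 0 with hU₀def
        have hU₀ : UpT U₀ := by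
          intro k j hjk
          show (if j = j₀ then (if k = j₀ then (A 0 j₀)⁻¹ else 0)
            else if k = j then 1 else if k = j₀ then -(A 0 j) * (A 0 j₀)⁻¹ else 0) = 0
          by_cases hj : j = j₀
          · subst hj
            rw [if_pos rfl, if_neg (fun hk => absurd (hk ▸ hjk) (lt_irrefl _))]
          · rw [if_neg hj, if_neg (fun hk => absurd (hk ▸ hjk) (lt_irrefl _))]
            by_cases hk : k = j₀
            · subst hk
              have hAj : A 0 j = 0 := by
                by_contra hne
                exact absurd (lt_of_le_of_lt (hmin j hne) hjk) (lt_irrefl _)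
              rw [if_pos rfl, hAj]
              ring
            · rw [if_neg hk]
        have hU₀j₀j₀ : U₀ j₀ j₀ = (A 0 j₀)⁻¹ := by simp [hU₀def]
        have hU₀jj : ∀ j, j ≠ j₀ → U₀ j j = 1 := by
          intro j hj; simp [hU₀def, hj]
        have hU₀kj₀ : ∀ k, k ≠ j₀ → U₀ k j₀ = 0 := by
          intro k hk; simp [hU₀def, hk]
        have hU₀j₀j : ∀ j, j ≠ j₀ → U₀ j₀ j = -(A 0 j) * (A 0 j₀)⁻¹ := by
          intro j hj; simp [hU₀def, hj, Ne.symm hj]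
        have hU₀other : ∀ k j, j ≠ j₀ → k ≠ j → k ≠ j₀ → U₀ k j = 0 := by
          intro k j h1 h2 h3; simp [hU₀def, h1, h2, h3]
        have hU₀det : IsUnit U₀.det := by
          rw [hU₀.det_eq, isUnit_iff_ne_zero, Finset.prod_ne_zero_iff]
          intro j _
          by_cases hj : j = j₀
          · subst hj; rw [hU₀j₀j₀]; exact inv_ne_zero hj₀
          · rw [hU₀jj j hj]; exact one_ne_zero
        set C := A * U₀ with hCdef
        have hC0 : ∀ j, C 0 j = if j = j₀ then 1 else 0 := by
          intro j
          rw [hCdef, Matrix.mul_apply]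
          by_cases hj : j = j₀
          · subst hj
            rw [if_pos rfl, Finset.sum_eq_single j₀]
            · rw [hU₀j₀j₀, mul_inv_cancel₀ hj₀]
            · intro k _ hk
              rw [hU₀kj₀ k hk, mul_zero]
            · exact fun h => absurd (Finset.mem_univ _) h
          · rw [if_neg hj]
            have hvan : ∀ k ∈ Finset.univ, k ∉ ({j, j₀} : Finset (Fin (n+1))) →
                A 0 k * U₀ k j = 0 := by
              intro k _ hk
              simp only [Finset.mem_insert, Finset.mem_singleton, not_or] at hk
              rw [hU₀other k j hj hk.1 hk.2, mul_zero]
            rw [← Finset.sum_subset (Finset.subset_univ _) hvan, Finset.sum_pair hj,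
              hU₀jj j hj, hU₀j₀j j hj, mul_one]
            field_simp
            ring
        set L₀ : Matrix (Fin (m+1)) (Fin (m+1)) ℝ := Matrix.of fun i k =>
          if i = k then 1 else if k = 0 then -(C i j₀) else 0 with hL₀def
        have hL₀ : LoT L₀ := by
          intro i k hik
          show (if i = k then (1:ℝ) else if k = 0 then -(C i j₀) else 0) = 0
          rw [if_neg (ne_of_lt hik), if_neg]
          intro hk0
          subst hk0
          exact absurd hik (Fin.not_lt_zero i)
        have hL₀det : IsUnit L₀.det := by
          rw [hL₀.det_eq, isUnit_iff_ne_zero, Finset.prod_ne_zero_iff]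
          intro i _
          show (if i = i then (1:ℝ) else if i = 0 then -(C i j₀) else 0) ≠ 0
          simp
        set D := L₀ * C with hDdef
        have hDsucc : ∀ (i : Fin m) (j : Fin (n+1)),
            D i.succ j = C i.succ j - C i.succ j₀ * C 0 j := by
          intro i j
          rw [hDdef, Matrix.mul_apply]
          have hvan : ∀ k ∈ Finset.univ, k ∉ ({i.succ, 0} : Finset (Fin (m+1))) →
              L₀ i.succ k * C k j = 0 := by
            intro k _ hk
            simp only [Finset.mem_insert, Finset.mem_singleton, not_or] at hk
            show (if i.succ = k then (1:ℝ) else if k = 0 then -(C i.succ j₀) else 0) * C k j = 0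
            rw [if_neg (fun h => hk.1 h.symm), if_neg hk.2, zero_mul]
          rw [← Finset.sum_subset (Finset.subset_univ _) hvan,
            Finset.sum_pair (Fin.succ_ne_zero i)]
          show (if i.succ = i.succ then (1:ℝ) else _) * C i.succ j
            + (if i.succ = 0 then (1:ℝ) else if (0 : Fin (m+1)) = 0 then -(C i.succ j₀) else 0)
              * C 0 j = _
          rw [if_pos rfl, one_mul, if_neg (Fin.succ_ne_zero i), if_pos rfl]
          ring
        have hD0 : ∀ j, D 0 j = if j = j₀ then 1 else 0 := by
          intro j
          rw [hDdef, Matrix.mul_apply, Finset.sum_eq_single 0]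
          · show (if (0 : Fin (m+1)) = 0 then (1:ℝ) else if (0 : Fin (m+1)) = 0
                then -(C 0 j₀) else 0) * C 0 j = if j = j₀ then 1 else 0
            rw [if_pos rfl, one_mul]
            exact hC0 j
          · intro k _ hk
            show (if (0 : Fin (m+1)) = k then (1:ℝ) else if k = 0 then -(C 0 j₀) else 0)
              * C k j = 0
            rw [if_neg (fun h => hk h.symm), if_neg hk, zero_mul]
          · exact fun h => absurd (Finset.mem_univ _) h
        have hDcol : ∀ i : Fin m, D i.succ j₀ = 0 := by
          intro i
          rw [hDsucc, hC0, if_pos rfl]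
          ring
        obtain ⟨L₁, U₁, f₁, hL₁, hU₁, hLd₁, hUd₁, hf₁, hD₁⟩ :=
          ih n (Matrix.of fun (i : Fin m) (j : Fin n) => D i.succ (j₀.succAbove j))
        set F : Fin (m+1) → Option (Fin (n+1)) :=
          Fin.cons (some j₀) (fun i => (f₁ i).map j₀.succAbove) with hFdef
        have hFinj : PInj F := by
          intro i i' j hi hi'
          rcases Fin.eq_zero_or_eq_succ i with rfl | ⟨i2, rfl⟩ <;>
            rcases Fin.eq_zero_or_eq_succ i' with rfl | ⟨i2', rfl⟩
          · rfl
          · simp only [hFdef, Fin.cons_zero, Option.some_inj] at hi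
            simp only [hFdef, Fin.cons_succ, Option.map_eq_some_iff] at hi'
            obtain ⟨x, _, hxe⟩ := hi'
            subst hi
            exact absurd hxe (Fin.succAbove_ne j₀ x)
          · simp only [hFdef, Fin.cons_zero, Option.some_inj] at hi'
            simp only [hFdef, Fin.cons_succ, Option.map_eq_some_iff] at hi
            obtain ⟨x, _, hxe⟩ := hi
            subst hi'
            exact absurd hxe (Fin.succAbove_ne j₀ x)
          · simp only [hFdef, Fin.cons_succ, Option.map_eq_some_iff] at hi hi'
            obtain ⟨x, hx, hxe⟩ := hi
            obtain ⟨x', hx', hxe'⟩ := hi'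
            have hxx : x = x' :=
              Fin.succAbove_right_injective (p := j₀) (hxe.trans hxe'.symm)
            subst hxx
            exact congrArg Fin.succ (hf₁ hx hx')
        have hppF : ppMat F = Matrix.of (Fin.cons (fun j => if j = j₀ then (1:ℝ) else 0)
            (insCol j₀ (ppMat f₁))) := by
          ext i j
          rcases Fin.eq_zero_or_eq_succ i with rfl | ⟨i2, rfl⟩
          · show (if F 0 = some j then (1:ℝ) else 0) = _
            simp only [hFdef, Fin.cons_zero, Matrix.of_apply]
            erw [Fin.cons_zero]
            by_cases hj : j = j₀
            · subst hj
              rw [if_pos rfl, if_pos rfl]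
            · rw [if_neg (fun h => hj (Option.some_inj.mp h).symm), if_neg hj]
          · show (if F i2.succ = some j then (1:ℝ) else 0) = _
            simp only [hFdef, Fin.cons_succ, Matrix.of_apply]
            erw [Fin.cons_succ]
            by_cases hj : j = j₀
            · subst hj
              rw [insCol_apply_same, if_neg]
              intro h
              rw [Option.map_eq_some_iff] at h
              obtain ⟨x, _, hxe⟩ := h
              exact Fin.succAbove_ne j₀ x hxe
            · obtain ⟨j', rfl⟩ := Fin.exists_succAbove_eq hj
              rw [insCol_apply_succAbove]
              show _ = (if f₁ i2 = some j' then (1:ℝ) else 0)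
              congr 1
              rw [eq_iff_iff, Option.map_eq_some_iff]
              constructor
              · rintro ⟨x, hx, hxe⟩
                rwa [Fin.succAbove_right_injective (p := j₀) hxe] at hx
              · intro h
                exact ⟨j', h, rfl⟩
        have hD_eq : D = Matrix.of (Fin.cons (fun j => if j = j₀ then (1:ℝ) else 0)
            (insCol j₀ (Matrix.of fun (i : Fin m) (j : Fin n) =>
              D i.succ (j₀.succAbove j)))) := by
          ext i j
          rcases Fin.eq_zero_or_eq_succ i with rfl | ⟨i2, rfl⟩
          · simp only [Matrix.of_apply, Fin.cons_zero]
            exact hD0 j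
          · simp only [Matrix.of_apply, Fin.cons_succ]
            erw [Fin.cons_succ]
            by_cases hj : j = j₀
            · subst hj
              rw [insCol_apply_same]
              exact hDcol i2
            · obtain ⟨j', rfl⟩ := Fin.exists_succAbove_eq hj
              rw [insCol_apply_succAbove, Matrix.of_apply]
        have htop : (fun j => ∑ k, (if k = j₀ then (1:ℝ) else 0) * insU j₀ U₁ k j)
            = fun j => if j = j₀ then (1:ℝ) else 0 := by
          funext j
          rw [Finset.sum_eq_single j₀]
          · rw [if_pos rfl, one_mul, insU_row_same]
          · intro k _ hk
            rw [if_neg hk, zero_mul]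
          · exact fun h => absurd (Finset.mem_univ _) h
        have hmain : extL L₁ * ppMat F * insU j₀ U₁ = D := by
          rw [hppF, extL_mul_cons, mul_insCol, consRow_mul, insCol_mul_insU, ← hD₁, htop]
          exact hD_eq.symm
        have hDLAU : D = L₀ * A * U₀ := by rw [hDdef, hCdef, Matrix.mul_assoc]
        have hinvcalc : L₀⁻¹ * (L₀ * A * U₀) * U₀⁻¹ = A := by
          simp only [Matrix.mul_assoc]
          rw [Matrix.mul_nonsing_inv _ hU₀det, Matrix.mul_one, ← Matrix.mul_assoc,
            Matrix.nonsing_inv_mul _ hL₀det, Matrix.one_mul]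
        refine ⟨L₀⁻¹ * extL L₁, insU j₀ U₁ * U₀⁻¹, F, (hL₀.inv hL₀det).mul hL₁.extL,
          (hU₁.insU j₀).mul (hU₀.inv hU₀det), ?_, ?_, hFinj, ?_⟩
        · rw [Matrix.det_mul]
          exact (L₀.isUnit_nonsing_inv_det hL₀det).mul (by rwa [extL_det hL₁])
        · rw [Matrix.det_mul]
          refine IsUnit.mul ?_ (U₀.isUnit_nonsing_inv_det hU₀det)
          rwa [insU_det hU₁]
        · rw [show L₀⁻¹ * extL L₁ * ppMat F * (insU j₀ U₁ * U₀⁻¹)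
              = L₀⁻¹ * (extL L₁ * ppMat F * insU j₀ U₁) * U₀⁻¹ from by
            simp only [Matrix.mul_assoc], hmain, hDLAU]
          exact hinvcalc.symm
end LPU

lemma cntF_zero_left {m n : ℕ} (f : Fin m → Option (Fin n)) (q : ℕ) : cntF f 0 q = 0 := by
  simp [cntF]

lemma cntF_zero_right {m n : ℕ} (f : Fin m → Option (Fin n)) (p : ℕ) : cntF f p 0 = 0 := by
  simp [cntF]

/-- `rk(A_{[p,q]}) = rk(B_{[p,q]})` for all `1 ≤ p ≤ m`, `1 ≤ q ≤ n` iff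
`B = λ A μ` for an invertible lower triangular `λ` and an invertible upper
triangular `μ`. -/
theorem rank_eq_iff_triangular_equiv {m n : ℕ} (A B : Matrix (Fin m) (Fin n) ℝ) :
    (∀ (p q : ℕ) (_ : 1 ≤ p) (_ : 1 ≤ q) (hp : p ≤ m) (hq : q ≤ n),
        (ulSub A p q hp hq).rank = (ulSub B p q hp hq).rank) ↔
    ∃ (L : Matrix (Fin m) (Fin m) ℝ) (U : Matrix (Fin n) (Fin n) ℝ),
      (∀ i j : Fin m, i < j → L i j = 0) ∧
      (∀ i j : Fin n, j < i → U i j = 0) ∧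
      IsUnit L.det ∧ IsUnit U.det ∧ B = L * A * U := by
  constructor
  · intro hrk
    obtain ⟨L₁, U₁, f, hL₁, hU₁, hLd₁, hUd₁, hf, hA⟩ := exists_lpu m n A
    obtain ⟨L₂, U₂, g, hL₂, hU₂, hLd₂, hUd₂, hg, hB⟩ := exists_lpu m n B
    have hrankA : ∀ (p q : ℕ) (hp : p ≤ m) (hq : q ≤ n),
        (ulSub A p q hp hq).rank = cntF f p q := by
      intro p q hp hq
      rw [hA, rank_ulSub_mul _ _ _ hL₁ hU₁ hLd₁ hUd₁ hp hq, ulSub_ppMat,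
        rank_ppMat _ (hf.trunc p q hp hq), card_trunc]
    have hrankB : ∀ (p q : ℕ) (hp : p ≤ m) (hq : q ≤ n),
        (ulSub B p q hp hq).rank = cntF g p q := by
      intro p q hp hq
      rw [hB, rank_ulSub_mul _ _ _ hL₂ hU₂ hLd₂ hUd₂ hp hq, ulSub_ppMat,
        rank_ppMat _ (hg.trunc p q hp hq), card_trunc]
    have hcnt : ∀ p q : ℕ, p ≤ m → q ≤ n → cntF f p q = cntF g p q := by
      intro p q hp hq
      rcases Nat.eq_zero_or_pos p with rfl | hp1
      · rw [cntF_zero_left, cntF_zero_left]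
      rcases Nat.eq_zero_or_pos q with rfl | hq1
      · rw [cntF_zero_right, cntF_zero_right]
      rw [← hrankA p q hp hq, ← hrankB p q hp hq]
      exact hrk p q hp1 hq1 hp hq
    have hfg : f = g := cntF_eq_of_forall hcnt
    refine ⟨L₂ * L₁⁻¹, U₁⁻¹ * U₂, hL₂.mul (hL₁.inv hLd₁), (hU₁.inv hUd₁).mul hU₂, ?_, ?_, ?_⟩
    · rw [Matrix.det_mul]
      exact hLd₂.mul (L₁.isUnit_nonsing_inv_det hLd₁)
    · rw [Matrix.det_mul]
      exact (U₁.isUnit_nonsing_inv_det hUd₁).mul hUd₂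
    · rw [hB, ← hfg, hA]
      simp only [Matrix.mul_assoc]
      rw [show U₁ * (U₁⁻¹ * U₂) = U₂ from by
          rw [← Matrix.mul_assoc, Matrix.mul_nonsing_inv _ hUd₁, Matrix.one_mul],
        show L₁⁻¹ * (L₁ * (ppMat f * U₂)) = ppMat f * U₂ from by
          rw [← Matrix.mul_assoc, Matrix.nonsing_inv_mul _ hLd₁, Matrix.one_mul]]
  · rintro ⟨L, U, hL, hU, hLd, hUd, rfl⟩
    intro p q _ _ hp hq
    exact (rank_ulSub_mul L A U hL hU hLd hUd hp hq).symm
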